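/- Let the pair (A,B) be controllable, i.e., the controllability matrix [B, AB, …, A^{n−1}B] has rank n. Let {u_k}_{k=0}^{M−1} ⊂ ℝ^m satisfy rank(H_{L+n}(u)) = (L+n)m, let {x_k}_{k=0}^{M−1} satisfy x_{k+1} = A x_k + B u_k, and let y_k = C x_k + D u_k. Then a pair of sequences {ū_k}_{k=0}^{L−1} ⊂ ℝ^m, {ȳ_k}_{k=0}^{L−1} ⊂ ℝ^p is an input-output trajectory of the system x_{k+1} = A x_k + B u_k, y_k = C x_k + D u_k (i.e., there exists a state sequence {x̄_k}_{k=0}^{L−1} with x̄_{k+1} = A x̄_k + B ū_k and ȳ_k = C x̄_k + D ū_k) if and only if there exists a vector α ∈ ℝ^{M−L+1} such that H_L(u) α equals the stacked vector [ū_0; …; ū_{L−1}] and H_L(y) α equals the stacked vector [ȳ_0; …; ȳ_{L−1}]. -/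
import Mathlib


/-- Controllability matrix `[B, AB, …, A^{n-1}B]` of the pair `(A,B)`. -/
def ctrbMat {n m : ℕ} (A : Matrix (Fin n) (Fin n) ℝ) (B : Matrix (Fin n) (Fin m) ℝ) :
    Matrix (Fin n) (Fin n × Fin m) ℝ :=
  Matrix.of fun i p => (A ^ (p.1 : ℕ) * B) i p.2

/-- Hankel matrix of depth `L` of a sequence `z_0, …, z_{M-1}` in `ℝ^σ`:
the `σL × (M-L+1)` matrix whose `(i,j)` block is `z_{i+j}`. -/
def dHankel {σ : ℕ} (L M : ℕ) (z : ℕ → Fin σ → ℝ) :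
    Matrix (Fin L × Fin σ) (Fin (M - L + 1)) ℝ :=
  Matrix.of fun p j => z ((p.1 : ℕ) + (j : ℕ)) p.2

open Matrix Module Finset

lemma aux_vecMul_eq_zero {r c : Type*} [Fintype r] [Fintype c] [DecidableEq r]
    (M : Matrix r c ℝ) (h : M.rank = Fintype.card r) :
    ∀ v, M.vecMul v = 0 → v = 0 := by
  have ht : Mᵀ.rank = Fintype.card r := by rw [Matrix.rank_transpose]; exact h
  have hker : LinearMap.ker Mᵀ.mulVecLin = ⊥ := by
    have h1 := LinearMap.finrank_range_add_finrank_ker Mᵀ.mulVecLin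
    rw [show finrank ℝ (LinearMap.range Mᵀ.mulVecLin) = Mᵀ.rank from rfl] at h1
    rw [ht] at h1
    have h2 : finrank ℝ (r → ℝ) = Fintype.card r := finrank_pi ℝ
    rw [h2] at h1
    have : finrank ℝ (LinearMap.ker Mᵀ.mulVecLin) = 0 := by omega
    exact Submodule.finrank_eq_zero.mp this
  intro v hv
  have h3 : Mᵀ.mulVecLin v = 0 := by
    rw [Matrix.mulVecLin_apply, Matrix.mulVec_transpose]; exact hv
  have := LinearMap.ker_eq_bot.mp hker (by simpa using h3 : Mᵀ.mulVecLin v = Mᵀ.mulVecLin 0)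
  simpa using this

lemma sum_ite_lt (N k : ℕ) (f : ℕ → ℝ) :
    ∑ r ∈ Finset.range N, (if r < k then f r else 0) = ∑ r ∈ Finset.range (min k N), f r := by
  rw [← Finset.sum_filter]
  congr 1
  ext r; simp; omega

lemma sum_ite_ge (N k : ℕ) (f : ℕ → ℝ) :
    ∑ r ∈ Finset.range N, (if k ≤ r then f (r - k) else 0) = ∑ t ∈ Finset.range (N - k), f t := by
  rw [← Finset.sum_filter]
  have h : Finset.filter (fun r => k ≤ r) (Finset.range N) = Finset.Ico k N := by
    ext r; simp; omega
  rw [h, Finset.sum_Ico_eq_sum_range]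
  exact Finset.sum_congr rfl fun t _ => by congr 1; omega

lemma dot_mulVec {a b : ℕ} (P : Matrix (Fin a) (Fin b) ℝ) (ξ : Fin a → ℝ) (v : Fin b → ℝ) :
    ∑ i, ξ i * (P.mulVec v) i = ∑ s, (∑ i, ξ i * P i s) * v s := by
  simp only [Matrix.mulVec, dotProduct, Finset.mul_sum, Finset.sum_mul]
  rw [Finset.sum_comm]
  exact Finset.sum_congr rfl fun s _ => Finset.sum_congr rfl fun i _ => by ring

lemma willems_xtrans {n m M : ℕ} (A : Matrix (Fin n) (Fin n) ℝ) (B : Matrix (Fin n) (Fin m) ℝ)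
    (u : ℕ → Fin m → ℝ) (x : ℕ → Fin n → ℝ)
    (hx : ∀ k : ℕ, k + 1 < M → x (k + 1) = A.mulVec (x k) + B.mulVec (u k)) :
    ∀ k j : ℕ, j + k < M →
      x (j + k) = (A ^ k).mulVec (x j)
        + ∑ i ∈ Finset.range k, (A ^ (k - 1 - i) * B).mulVec (u (j + i)) := by
  intro k
  induction k with
  | zero => intro j _; simp
  | succ k ih =>
    intro j hj
    have h1 : j + k + 1 < M := by omega
    rw [show j + (k+1) = (j + k) + 1 from rfl, hx _ h1, ih j (by omega)]
    rw [Matrix.mulVec_add, Matrix.mulVec_mulVec, Finset.sum_range_succ]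
    have hA : A * A ^ k = A ^ (k + 1) := (pow_succ' A k).symm
    rw [hA]
    have hsum : A.mulVec (∑ i ∈ Finset.range k, (A ^ (k - 1 - i) * B).mulVec (u (j + i)))
        = ∑ i ∈ Finset.range k, (A ^ (k + 1 - 1 - i) * B).mulVec (u (j + i)) := by
      have h0 := map_sum A.mulVecLin (fun i => (A ^ (k - 1 - i) * B).mulVec (u (j + i))) (Finset.range k)
      simp only [Matrix.mulVecLin_apply] at h0
      rw [h0]
      refine Finset.sum_congr rfl fun i hi => ?_
      have hik := Finset.mem_range.mp hi
      rw [Matrix.mulVec_mulVec, ← Matrix.mul_assoc, ← pow_succ']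
      have he : k - 1 - i + 1 = k + 1 - 1 - i := by omega
      rw [he]
    rw [hsum]
    have hB : A ^ (k + 1 - 1 - k) * B = B := by simp
    rw [hB]
    abel

lemma willems_key {n m M L : ℕ} (hL : 1 ≤ L) (hM : L + n ≤ M)
    (A : Matrix (Fin n) (Fin n) ℝ) (B : Matrix (Fin n) (Fin m) ℝ)
    (hctrb : (ctrbMat A B).rank = n)
    (u : ℕ → Fin m → ℝ) (x : ℕ → Fin n → ℝ)
    (hx : ∀ k : ℕ, k + 1 < M → x (k + 1) = A.mulVec (x k) + B.mulVec (u k))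
    (hpe : (dHankel (L + n) M u).rank = (L + n) * m)
    (ξ : Fin n → ℝ) (η' : ℕ → Fin m → ℝ) (hηL : ∀ t, L ≤ t → η' t = 0)
    (hker : ∀ j : ℕ, j ≤ M - L →
      (∑ i, ξ i * x j i) + ∑ t ∈ Finset.range L, ∑ s, η' t s * u (t + j) s = 0) :
    ξ = 0 ∧ ∀ t, η' t = 0 := by
  have hcn : A.charpoly.coeff n = 1 := by
    have hmon := A.charpoly_monic
    have hd : A.charpoly.natDegree = n := by
      rw [Matrix.charpoly_natDegree_eq_dim, Fintype.card_fin]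
    simpa [hd] using hmon.coeff_natDegree
  have hCH : ∑ k ∈ Finset.range (n + 1), A.charpoly.coeff k • A ^ k = 0 := by
    have h := Matrix.aeval_self_charpoly A
    rwa [Polynomial.aeval_eq_sum_range, Matrix.charpoly_natDegree_eq_dim, Fintype.card_fin] at h
  have hCHe : ∀ i i' : Fin n, ∑ k ∈ Finset.range (n + 1), A.charpoly.coeff k * (A ^ k) i i' = 0 := by
    intro i i'
    have h := congrFun (congrFun hCH i) i'
    simpa [Matrix.sum_apply, Matrix.smul_apply, smul_eq_mul] using h
  -- W = 0
  have hW0 : ∀ r, r < L + n → ∀ s : Fin m,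
      ∑ k ∈ Finset.range (n + 1), A.charpoly.coeff k *
        ((if r < k then ∑ i, ξ i * (A ^ (k - 1 - r) * B) i s else 0)
          + (if k ≤ r then η' (r - k) s else 0)) = 0 := by
    have hvm : Matrix.vecMul
        (fun q : Fin (L + n) × Fin m =>
          ∑ k ∈ Finset.range (n + 1), A.charpoly.coeff k *
            ((if (q.1 : ℕ) < k then ∑ i, ξ i * (A ^ (k - 1 - (q.1 : ℕ)) * B) i q.2 else 0)
              + (if k ≤ (q.1 : ℕ) then η' ((q.1 : ℕ) - k) q.2 else 0)))
        (dHankel (L + n) M u) = 0 := by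
      funext j
      have hj : (j : ℕ) ≤ M - (L + n) := by omega
      show (∑ q : Fin (L + n) × Fin m, _ * dHankel (L + n) M u q j) = 0
      simp only [Matrix.vecMul, dotProduct, dHankel, Matrix.of_apply]
      rw [Fintype.sum_prod_type]
      rw [Fin.sum_univ_eq_sum_range (fun r =>
        ∑ s, (∑ k ∈ Finset.range (n + 1), A.charpoly.coeff k *
            ((if r < k then ∑ i, ξ i * (A ^ (k - 1 - r) * B) i s else 0)
              + (if k ≤ r then η' (r - k) s else 0))) * u (r + (j : ℕ)) s) (L + n)]
      set jv : ℕ := (j : ℕ) with hjv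
      -- step 1: pull k out
      have step1 : ∀ r, (∑ s, (∑ k ∈ Finset.range (n + 1), A.charpoly.coeff k *
            ((if r < k then ∑ i, ξ i * (A ^ (k - 1 - r) * B) i s else 0)
              + (if k ≤ r then η' (r - k) s else 0))) * u (r + jv) s)
          = ∑ k ∈ Finset.range (n + 1), A.charpoly.coeff k *
              ((if r < k then ∑ s, (∑ i, ξ i * (A ^ (k - 1 - r) * B) i s) * u (r + jv) s else 0)
                + (if k ≤ r then ∑ s, η' (r - k) s * u (r + jv) s else 0)) := by
        intro r
        have gen : ∀ (P Q : Fin m → ℝ) (cc : ℝ) (w : Fin m → ℝ),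
            ∑ s, (cc * (P s + Q s)) * w s = cc * ((∑ s, P s * w s) + ∑ s, Q s * w s) := by
          intro P Q cc w
          rw [← Finset.sum_add_distrib, Finset.mul_sum]
          exact Finset.sum_congr rfl fun s _ => by ring
        have iteswap : ∀ (cond : Prop) [Decidable cond] (f w : Fin m → ℝ),
            ∑ s, (if cond then f s else 0) * w s = (if cond then ∑ s, f s * w s else 0) := by
          intro cond inst f w
          split <;> simp
        simp only [Finset.sum_mul]
        rw [Finset.sum_comm]
        refine Finset.sum_congr rfl fun k _ => ?_
        rw [gen (fun s => if r < k then ∑ i, ξ i * (A ^ (k - 1 - r) * B) i s else 0)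
          (fun s => if k ≤ r then η' (r - k) s else 0) (A.charpoly.coeff k) (fun s => u (r + jv) s)]
        rw [iteswap (r < k), iteswap (k ≤ r)]
        simp only [Finset.sum_mul]
      simp only [step1]
      rw [Finset.sum_comm]
      have step3 : ∀ k, k ≤ n → (∑ i, ξ i * x (jv + k) i)
          = (∑ i, ξ i * ((A ^ k).mulVec (x jv)) i)
            + ∑ r ∈ Finset.range k, ∑ s, (∑ i, ξ i * (A ^ (k - 1 - r) * B) i s) * u (r + jv) s := by
        intro k hkn
        have hjk : jv + k < M := by omega
        rw [willems_xtrans A B u x hx k jv hjk]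
        simp only [Pi.add_apply, mul_add, Finset.sum_add_distrib]
        congr 1
        have happ : ∀ i : Fin n,
            (∑ r ∈ Finset.range k, (A ^ (k - 1 - r) * B).mulVec (u (jv + r))) i
              = ∑ r ∈ Finset.range k, ((A ^ (k - 1 - r) * B).mulVec (u (jv + r))) i :=
          fun i => Finset.sum_apply i _ _
        simp only [happ, Finset.mul_sum]
        rw [Finset.sum_comm]
        refine Finset.sum_congr rfl fun r _ => ?_
        rw [dot_mulVec]
        refine Finset.sum_congr rfl fun s _ => ?_
        rw [Nat.add_comm jv r]
      have hT0 : ∑ k ∈ Finset.range (n + 1),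
          A.charpoly.coeff k * (∑ i, ξ i * ((A ^ k).mulVec (x jv)) i) = 0 := by
        have h1 : ∀ k : ℕ, (∑ i, ξ i * ((A ^ k).mulVec (x jv)) i)
            = ∑ i, ∑ i', ξ i * ((A ^ k) i i' * x jv i') := by
          intro k; simp only [Matrix.mulVec, dotProduct, Finset.mul_sum]
        simp only [h1, Finset.mul_sum]
        rw [Finset.sum_comm]
        refine Finset.sum_eq_zero fun i _ => ?_
        rw [Finset.sum_comm]
        refine Finset.sum_eq_zero fun i' _ => ?_
        have h2 : ∑ k ∈ Finset.range (n + 1), A.charpoly.coeff k * (ξ i * ((A ^ k) i i' * x jv i'))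
            = (ξ i * x jv i') * ∑ k ∈ Finset.range (n + 1), A.charpoly.coeff k * (A ^ k) i i' := by
          rw [Finset.mul_sum]; exact Finset.sum_congr rfl fun k _ => by ring
        rw [h2, hCHe, mul_zero]
      have step2 : ∀ k ∈ Finset.range (n + 1),
          (∑ r ∈ Finset.range (L + n), A.charpoly.coeff k *
            ((if r < k then ∑ s, (∑ i, ξ i * (A ^ (k - 1 - r) * B) i s) * u (r + jv) s else 0)
              + (if k ≤ r then ∑ s, η' (r - k) s * u (r + jv) s else 0)))
          = -(A.charpoly.coeff k * (∑ i, ξ i * ((A ^ k).mulVec (x jv)) i)) := by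
        intro k hk
        have hkn : k ≤ n := Nat.lt_succ_iff.mp (Finset.mem_range.mp hk)
        rw [← Finset.mul_sum, Finset.sum_add_distrib]
        have e1 : ∑ r ∈ Finset.range (L + n),
            (if r < k then ∑ s, (∑ i, ξ i * (A ^ (k - 1 - r) * B) i s) * u (r + jv) s else 0)
            = ∑ r ∈ Finset.range k, ∑ s, (∑ i, ξ i * (A ^ (k - 1 - r) * B) i s) * u (r + jv) s := by
          rw [sum_ite_lt, min_eq_left (by omega)]
        have e2 : ∑ r ∈ Finset.range (L + n),
            (if k ≤ r then ∑ s, η' (r - k) s * u (r + jv) s else 0)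
            = ∑ t ∈ Finset.range L, ∑ s, η' t s * u (t + (jv + k)) s := by
          have e : ∑ r ∈ Finset.range (L + n), (if k ≤ r then ∑ s, η' (r - k) s * u (r + jv) s else 0)
              = ∑ r ∈ Finset.range (L + n),
                  (if k ≤ r then ∑ s, η' (r - k) s * u ((r - k) + (jv + k)) s else 0) := by
            refine Finset.sum_congr rfl fun r _ => ?_
            split
            · next h =>
                refine Finset.sum_congr rfl fun s _ => ?_
                rw [show r - k + (jv + k) = r + jv by omega]
            · rfl
          have e3 : ∑ t ∈ Finset.range (L + n - k), (∑ s, η' t s * u (t + (jv + k)) s)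
              = ∑ t ∈ Finset.range L, ∑ s, η' t s * u (t + (jv + k)) s := by
            refine (Finset.sum_subset (Finset.range_subset_range.mpr (by omega : L ≤ L + n - k)) ?_).symm
            intro t _ htL
            have hLt : L ≤ t := by simpa using htL
            simp [hηL t hLt]
          exact e.trans ((sum_ite_ge (L + n) k
            (fun t => ∑ s, η' t s * u (t + (jv + k)) s)).trans e3)
        rw [e1, e2]
        have hker' := hker (jv + k) (by omega)
        have hst := step3 k hkn
        have hF : (∑ r ∈ Finset.range k, ∑ s, (∑ i, ξ i * (A ^ (k - 1 - r) * B) i s) * u (r + jv) s)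
            + ∑ t ∈ Finset.range L, ∑ s, η' t s * u (t + (jv + k)) s
            = -(∑ i, ξ i * ((A ^ k).mulVec (x jv)) i) := by linarith
        rw [hF]; ring
      rw [Finset.sum_congr rfl step2]
      rw [Finset.sum_neg_distrib, hT0, neg_zero]
    intro r hr s
    have hz := aux_vecMul_eq_zero (dHankel (L + n) M u)
      (by rw [Fintype.card_prod, Fintype.card_fin, Fintype.card_fin]; exact hpe) _ hvm
    have h := congrFun hz (⟨r, hr⟩, s)
    simpa using h
  -- η vanishes
  have hη : ∀ d q, L ≤ q + d → η' q = 0 := by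
    intro d
    induction d with
    | zero => intro q hq; exact hηL q (by omega)
    | succ d ih =>
      intro q hq
      by_cases hqL : L ≤ q
      · exact hηL q hqL
      · push_neg at hqL
        funext s
        have hw := hW0 (q + n) (by omega) s
        have hw' : ∑ k ∈ Finset.range (n + 1), A.charpoly.coeff k * η' (q + n - k) s = 0 := by
          rw [← hw]
          refine Finset.sum_congr rfl fun k hk => ?_
          have hkn : k ≤ n := Nat.lt_succ_iff.mp (Finset.mem_range.mp hk)
          rw [if_neg (by omega), if_pos (by omega), zero_add]
        rw [Finset.sum_range_succ] at hw'
        have hz : ∀ k ∈ Finset.range n, A.charpoly.coeff k * η' (q + n - k) s = 0 := by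
          intro k hk
          have hkn := Finset.mem_range.mp hk
          have hLd : L ≤ (q + n - k) + d := by omega
          rw [ih _ hLd]
          simp
        rw [Finset.sum_eq_zero hz, zero_add, hcn, one_mul,
          show q + n - n = q by omega] at hw'
        simpa using hw'
  have hη0 : ∀ t, η' t = 0 := fun t => hη L t (by omega)
  -- ξ row vanishes
  have hξrow : ∀ a, a < n → ∀ s : Fin m, ∑ i, ξ i * (A ^ a * B) i s = 0 := by
    intro a
    induction a using Nat.strong_induction_on with
    | _ a ih =>
      intro ha s
      have hw := hW0 (n - 1 - a) (by omega) s
      have hw' : ∑ k ∈ Finset.range (n + 1), A.charpoly.coeff k *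
          (if n - 1 - a < k then ∑ i, ξ i * (A ^ (k - 1 - (n - 1 - a)) * B) i s else 0) = 0 := by
        have he : ∑ k ∈ Finset.range (n + 1), A.charpoly.coeff k *
            (if n - 1 - a < k then ∑ i, ξ i * (A ^ (k - 1 - (n - 1 - a)) * B) i s else 0)
            = ∑ k ∈ Finset.range (n + 1), A.charpoly.coeff k *
              ((if n - 1 - a < k then ∑ i, ξ i * (A ^ (k - 1 - (n - 1 - a)) * B) i s else 0)
                + (if k ≤ n - 1 - a then η' (n - 1 - a - k) s else 0)) := by
          refine Finset.sum_congr rfl fun k hk => ?_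
          have hz2 : (if k ≤ n - 1 - a then η' (n - 1 - a - k) s else 0) = 0 := by simp [hη0]
          rw [hz2, add_zero]
        rw [he]
        exact hw
      rw [Finset.sum_range_succ, if_pos (by omega), hcn, one_mul,
        show n - 1 - (n - 1 - a) = a by omega] at hw'
      have hz : ∀ k ∈ Finset.range n, A.charpoly.coeff k *
          (if n - 1 - a < k then ∑ i, ξ i * (A ^ (k - 1 - (n - 1 - a)) * B) i s else 0) = 0 := by
        intro k hk
        have hkn := Finset.mem_range.mp hk
        by_cases h : n - 1 - a < k
        · rw [if_pos h]
          have hlt : k - 1 - (n - 1 - a) < a := by omega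
          rw [ih _ hlt (by omega) s, mul_zero]
        · rw [if_neg h, mul_zero]
      rw [Finset.sum_eq_zero hz, zero_add] at hw'
      exact hw'
  have hxi : ξ = 0 := by
    apply aux_vecMul_eq_zero (ctrbMat A B) (by rw [Fintype.card_fin]; exact hctrb)
    funext q
    show ∑ i, ξ i * ctrbMat A B i q = 0
    simpa [ctrbMat] using hξrow (q.1 : ℕ) q.1.isLt q.2
  exact ⟨hxi, hη0⟩


lemma aux_mulVec_surjective {r c : Type*} [Fintype r] [Fintype c] [DecidableEq r]
    (M : Matrix r c ℝ) (h : ∀ v, M.vecMul v = 0 → v = 0) :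
    Function.Surjective M.mulVec := by
  have hinj : Function.Injective Mᵀ.mulVecLin := by
    rw [← LinearMap.ker_eq_bot]
    refine (Submodule.eq_bot_iff _).mpr fun v hv => ?_
    exact h v (by rw [← Matrix.mulVec_transpose]; exact hv)
  have hrk : Mᵀ.rank = Fintype.card r := by
    rw [Matrix.rank, LinearMap.finrank_range_of_inj hinj, finrank_pi]
  have hrk2 : M.rank = Fintype.card r := by rw [← Matrix.rank_transpose]; exact hrk
  have htop : LinearMap.range M.mulVecLin = ⊤ := by
    apply Submodule.eq_top_of_finrank_eq
    rw [show finrank ℝ (LinearMap.range M.mulVecLin) = M.rank from rfl, hrk2, finrank_pi]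
  intro w
  obtain ⟨v, hv⟩ := LinearMap.range_eq_top.mp htop w
  exact ⟨v, hv⟩

lemma comb {a b : ℕ} {ι : Type*} [Fintype ι] (P : Matrix (Fin a) (Fin b) ℝ)
    (v : ι → Fin b → ℝ) (α : ι → ℝ) (i : Fin a) :
    ∑ j, (P.mulVec (v j)) i * α j = (P.mulVec (fun s => ∑ j, v j s * α j)) i := by
  simp only [Matrix.mulVec, dotProduct, Finset.mul_sum, Finset.sum_mul]
  rw [Finset.sum_comm]
  exact Finset.sum_congr rfl fun s _ => Finset.sum_congr rfl fun j _ => by ring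

lemma comb2 {a b : ℕ} {ι : Type*} [Fintype ι] (P : Matrix (Fin a) (Fin b) ℝ)
    (v : ι → Fin b → ℝ) (w : Fin b → ℝ) (α : ι → ℝ)
    (hw : ∀ s, ∑ j, v j s * α j = w s) (i : Fin a) :
    ∑ j, (P.mulVec (v j)) i * α j = (P.mulVec w) i := by
  rw [comb, show (fun s => ∑ j, v j s * α j) = w from funext hw]

lemma combAdd {a b b' : ℕ} {ι : Type*} [Fintype ι]
    (P : Matrix (Fin a) (Fin b) ℝ) (Q : Matrix (Fin a) (Fin b') ℝ)
    (v : ι → Fin b → ℝ) (vw : Fin b → ℝ) (z : ι → Fin b' → ℝ) (zw : Fin b' → ℝ) (α : ι → ℝ)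
    (hv : ∀ s, ∑ j, v j s * α j = vw s) (hz : ∀ s, ∑ j, z j s * α j = zw s) (i : Fin a) :
    ∑ j, ((P.mulVec (v j)) i + (Q.mulVec (z j)) i) * α j
      = (P.mulVec vw) i + (Q.mulVec zw) i := by
  rw [show (∑ j, ((P.mulVec (v j)) i + (Q.mulVec (z j)) i) * α j)
      = (∑ j, (P.mulVec (v j)) i * α j) + ∑ j, (Q.mulVec (z j)) i * α j from by
    rw [← Finset.sum_add_distrib]; exact Finset.sum_congr rfl fun j _ => by ring]
  rw [comb2 P v vw α hv i, comb2 Q z zw α hz i]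


/-- **Willems' fundamental lemma (discrete time).**
Let `(A,B)` be controllable and let the input Hankel matrix of depth `L+n` have full
row rank.  Then `(ū, ȳ)` of length `L` is an input-output trajectory of the system
`x_{k+1} = A x_k + B u_k`, `y_k = C x_k + D u_k` if and only if there exists
`α ∈ ℝ^{M-L+1}` with `H_L(u) α = [ū_0; …; ū_{L-1}]` and `H_L(y) α = [ȳ_0; …; ȳ_{L-1}]`. -/
theorem stmt1 {n m p M L : ℕ} (hL : 1 ≤ L) (hM : L + n ≤ M)
    (A : Matrix (Fin n) (Fin n) ℝ) (B : Matrix (Fin n) (Fin m) ℝ)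
    (C : Matrix (Fin p) (Fin n) ℝ) (D : Matrix (Fin p) (Fin m) ℝ)
    (hctrb : (ctrbMat A B).rank = n)
    (u : ℕ → Fin m → ℝ) (x : ℕ → Fin n → ℝ) (y : ℕ → Fin p → ℝ)
    (hx : ∀ k : ℕ, k + 1 < M → x (k + 1) = A.mulVec (x k) + B.mulVec (u k))
    (hy : ∀ k : ℕ, k < M → y k = C.mulVec (x k) + D.mulVec (u k))
    (hpe : (dHankel (L + n) M u).rank = (L + n) * m)
    (ub : ℕ → Fin m → ℝ) (yb : ℕ → Fin p → ℝ) :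
    (∃ xb : ℕ → Fin n → ℝ,
      (∀ k : ℕ, k + 1 < L → xb (k + 1) = A.mulVec (xb k) + B.mulVec (ub k)) ∧
      (∀ k : ℕ, k < L → yb k = C.mulVec (xb k) + D.mulVec (ub k))) ↔
    (∃ α : Fin (M - L + 1) → ℝ,
      (dHankel L M u).mulVec α = (fun q : Fin L × Fin m => ub (q.1 : ℕ) q.2) ∧
      (dHankel L M y).mulVec α = (fun q : Fin L × Fin p => yb (q.1 : ℕ) q.2)) := by
  constructor
  · rintro ⟨xb, hxb, hyb⟩
    -- the stacked matrix [X₀ ; H_L(u)] is surjective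
    have hGker : ∀ v : (Fin n ⊕ Fin L × Fin m) → ℝ,
        (Matrix.of fun r (j : Fin (M - L + 1)) =>
          Sum.elim (fun i : Fin n => x (j : ℕ) i)
            (fun q : Fin L × Fin m => u ((q.1 : ℕ) + (j : ℕ)) q.2) r).vecMul v = 0 → v = 0 := by
      intro v hv
      have hker : ∀ jn : ℕ, jn ≤ M - L →
          (∑ i, v (Sum.inl i) * x jn i)
            + ∑ t ∈ Finset.range L, ∑ s,
                (if h : t < L then v (Sum.inr (⟨t, h⟩, s)) else 0) * u (t + jn) s = 0 := by
        intro jn hjn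
        have h := congrFun hv ⟨jn, by omega⟩
        simp only [Matrix.vecMul, dotProduct, Pi.zero_apply, Matrix.of_apply] at h
        rw [Fintype.sum_sum_type] at h
        have e2 : ∑ q : Fin L × Fin m,
              v (Sum.inr q) * Sum.elim (fun i : Fin n => x jn i)
                (fun q : Fin L × Fin m => u ((q.1 : ℕ) + jn) q.2) (Sum.inr q)
            = ∑ t ∈ Finset.range L, ∑ s,
                (if h : t < L then v (Sum.inr (⟨t, h⟩, s)) else 0) * u (t + jn) s := by
          rw [Fintype.sum_prod_type]
          rw [← Fin.sum_univ_eq_sum_range (fun t => ∑ s,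
            (if h : t < L then v (Sum.inr (⟨t, h⟩, s)) else 0) * u (t + jn) s) L]
          refine Finset.sum_congr rfl fun t _ => Finset.sum_congr rfl fun s _ => ?_
          rw [dif_pos t.isLt]
          simp
        rw [e2] at h
        simpa using h
      obtain ⟨hξ, hη⟩ := willems_key hL hM A B hctrb u x hx hpe
        (fun i => v (Sum.inl i))
        (fun t s => if h : t < L then v (Sum.inr (⟨t, h⟩, s)) else 0)
        (fun t ht => funext fun s => dif_neg (by omega)) hker
      funext r
      cases r with
      | inl i => exact congrFun hξ i
      | inr q =>
        have := congrFun (hη (q.1 : ℕ)) q.2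
        rw [dif_pos q.1.isLt] at this
        simpa using this
    obtain ⟨α, hα⟩ := aux_mulVec_surjective _ hGker
      (Sum.elim (xb 0) (fun q : Fin L × Fin m => ub (q.1 : ℕ) q.2))
    have hαu : ∀ (k : ℕ) (hk : k < L) (s : Fin m),
        ∑ j : Fin (M - L + 1), u (k + (j : ℕ)) s * α j = ub k s := by
      intro k hk s
      have h := congrFun hα (Sum.inr (⟨k, hk⟩, s))
      simpa [Matrix.mulVec, dotProduct] using h
    have hαx0 : ∀ i, ∑ j : Fin (M - L + 1), x ((j : ℕ)) i * α j = xb 0 i := by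
      intro i
      have h := congrFun hα (Sum.inl i)
      simpa [Matrix.mulVec, dotProduct] using h
    have hxx : ∀ k, k < L → ∀ i, (∑ j : Fin (M - L + 1), x (k + (j : ℕ)) i * α j) = xb k i := by
      intro k
      induction k with
      | zero => intro _ i; simpa using hαx0 i
      | succ k ih =>
        intro hk1 i
        have hkL : k < L := by omega
        have e : ∀ j : Fin (M - L + 1), x (k + 1 + (j : ℕ)) i * α j
            = ((A.mulVec (x (k + (j : ℕ)))) i + (B.mulVec (u (k + (j : ℕ)))) i) * α j := by
          intro j
          have hb : (k + (j : ℕ)) + 1 < M := by omega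
          have h2 := congrFun (hx (k + (j : ℕ)) hb) i
          rw [show k + 1 + (j : ℕ) = (k + (j : ℕ)) + 1 by omega, h2]
          rfl
        rw [Finset.sum_congr rfl (fun j _ => e j),
          combAdd A B _ (xb k) _ (ub k) α (ih hkL) (hαu k hkL) i]
        exact (congrFun (hxb k hk1) i).symm
    refine ⟨α, ?_, ?_⟩
    · funext q
      show ∑ j : Fin (M - L + 1), u ((q.1 : ℕ) + (j : ℕ)) q.2 * α j = ub (q.1 : ℕ) q.2
      exact hαu (q.1 : ℕ) q.1.isLt q.2
    · funext q
      show ∑ j : Fin (M - L + 1), y ((q.1 : ℕ) + (j : ℕ)) q.2 * α j = yb (q.1 : ℕ) q.2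
      have e : ∀ j : Fin (M - L + 1), y ((q.1 : ℕ) + (j : ℕ)) q.2 * α j
          = ((C.mulVec (x ((q.1 : ℕ) + (j : ℕ)))) q.2
              + (D.mulVec (u ((q.1 : ℕ) + (j : ℕ)))) q.2) * α j := by
        intro j
        have hb : (q.1 : ℕ) + (j : ℕ) < M := by omega
        rw [congrFun (hy _ hb) q.2]
        rfl
      rw [Finset.sum_congr rfl (fun j _ => e j),
        combAdd C D _ (xb (q.1 : ℕ)) _ (ub (q.1 : ℕ)) α (hxx (q.1 : ℕ) q.1.isLt)
          (hαu (q.1 : ℕ) q.1.isLt) q.2]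
      exact (congrFun (hyb (q.1 : ℕ) q.1.isLt) q.2).symm
  · rintro ⟨α, hαu, hαy⟩
    have hαu' : ∀ (k : ℕ) (hk : k < L) (s : Fin m),
        ∑ j : Fin (M - L + 1), u (k + (j : ℕ)) s * α j = ub k s := by
      intro k hk s
      have h := congrFun hαu (⟨k, hk⟩, s)
      simpa [Matrix.mulVec, dotProduct, dHankel] using h
    have hαy' : ∀ (k : ℕ) (hk : k < L) (s : Fin p),
        ∑ j : Fin (M - L + 1), y (k + (j : ℕ)) s * α j = yb k s := by
      intro k hk s
      have h := congrFun hαy (⟨k, hk⟩, s)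
      simpa [Matrix.mulVec, dotProduct, dHankel] using h
    refine ⟨fun k i => ∑ j : Fin (M - L + 1), x (k + (j : ℕ)) i * α j, ?_, ?_⟩
    · intro k hk1
      funext i
      have e : ∀ j : Fin (M - L + 1), x (k + 1 + (j : ℕ)) i * α j
          = ((A.mulVec (x (k + (j : ℕ)))) i + (B.mulVec (u (k + (j : ℕ)))) i) * α j := by
        intro j
        have hb : (k + (j : ℕ)) + 1 < M := by omega
        have h2 := congrFun (hx (k + (j : ℕ)) hb) i
        rw [show k + 1 + (j : ℕ) = (k + (j : ℕ)) + 1 by omega, h2]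
        rfl
      show ∑ j : Fin (M - L + 1), x (k + 1 + (j : ℕ)) i * α j = _
      rw [Finset.sum_congr rfl (fun j _ => e j),
        combAdd A B _ (fun i' => ∑ j : Fin (M - L + 1), x (k + (j : ℕ)) i' * α j) _ (ub k) α
          (fun i' => rfl) (hαu' k (by omega)) i]
      rfl
    · intro k hk
      funext s
      have e : ∀ j : Fin (M - L + 1), y (k + (j : ℕ)) s * α j
          = ((C.mulVec (x (k + (j : ℕ)))) s + (D.mulVec (u (k + (j : ℕ)))) s) * α j := by
        intro j
        have hb : k + (j : ℕ) < M := by omega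
        rw [congrFun (hy _ hb) s]
        rfl
      have := hαy' k hk s
      rw [Finset.sum_congr rfl (fun j _ => e j),
        combAdd C D _ (fun i' => ∑ j : Fin (M - L + 1), x (k + (j : ℕ)) i' * α j) _ (ub k) α
          (fun i' => rfl) (hαu' k hk) s] at this
      exact this.symm
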